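/- There exists a torsion-free polycyclic group that is not left-orderable; specifically, Γ = ⟨t, u, v | [u,v] = t⁴, t u t⁻¹ = u⁻¹, t v t⁻¹ = v⁻¹⟩ is torsion-free, contains an index-two subgroup isomorphic to a finite-index subgroup of the Heisenberg group, and is not left-orderable. -/

import Mathlib

/-- The integral Heisenberg group, encoded by the three above-diagonal entries of a
`3 × 3` upper-triangular integer matrix with 1's on the diagonal. -/
def Heis : Type := ℤ × ℤ × ℤ

namespace Heis

instance : Mul Heis := ⟨fun a b => (a.1 + b.1, a.2.1 + b.2.1, a.2.2 + b.2.2 + a.1 * b.2.1)⟩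
instance : One Heis := ⟨((0 : ℤ), (0 : ℤ), (0 : ℤ))⟩
instance : Inv Heis := ⟨fun a => (-a.1, -a.2.1, -a.2.2 + a.1 * a.2.1)⟩

lemma mul_def (a b : Heis) :
    a * b = (a.1 + b.1, a.2.1 + b.2.1, a.2.2 + b.2.2 + a.1 * b.2.1) := rfl
lemma one_def : (1 : Heis) = ((0 : ℤ), (0 : ℤ), (0 : ℤ)) := rfl
lemma inv_def (a : Heis) : a⁻¹ = (-a.1, -a.2.1, -a.2.2 + a.1 * a.2.1) := rfl

instance : Group Heis where
  mul_assoc a b c := by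
    rw [mul_def, mul_def, mul_def a, mul_def]
    refine Prod.ext ?_ (Prod.ext ?_ ?_) <;> simp <;> ring
  one_mul a := by
    rw [mul_def]
    refine Prod.ext ?_ (Prod.ext ?_ ?_) <;> simp [one_def]
  mul_one a := by
    rw [mul_def]
    refine Prod.ext ?_ (Prod.ext ?_ ?_) <;> simp [one_def]
  inv_mul_cancel a := by
    rw [mul_def, inv_def]
    refine Prod.ext ?_ (Prod.ext ?_ ?_) <;> simp [one_def] <;> ring

end Heis

inductive ΓGen | t | u | v

open FreeGroup in
/-- The relations of `Γ = ⟨t, u, v | [u,v] = t⁴, t u t⁻¹ = u⁻¹, t v t⁻¹ = v⁻¹⟩`. -/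
def ΓRels : Set (FreeGroup ΓGen) :=
  { of ΓGen.u * of ΓGen.v * (of ΓGen.u)⁻¹ * (of ΓGen.v)⁻¹ * (of ΓGen.t ^ 4)⁻¹,
    of ΓGen.t * of ΓGen.u * (of ΓGen.t)⁻¹ * of ΓGen.u,
    of ΓGen.t * of ΓGen.v * (of ΓGen.t)⁻¹ * of ΓGen.v }

/-- A group is left-orderable if it carries a strict total order invariant under
left multiplication. -/
def IsLeftOrderable (G : Type*) [Group G] : Prop :=
  ∃ r : G → G → Prop, IsStrictTotalOrder G r ∧ ∀ a b c : G, r a b → r (c * a) (c * b)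

namespace Stmt15Aux

def sg (a : ℤ) : ℤ := if Even a then 1 else -1

lemma sg_even {a : ℤ} (h : Even a) : sg a = 1 := if_pos h
lemma sg_odd {a : ℤ} (h : ¬ Even a) : sg a = -1 := if_neg h
lemma sg_eq_one_or (a : ℤ) : sg a = 1 ∨ sg a = -1 := by
  unfold sg; split <;> simp

lemma sg_add (a b : ℤ) : sg (a + b) = sg a * sg b := by
  unfold sg
  by_cases ha : Even a <;> by_cases hb : Even b <;>
    simp [Int.even_add, ha, hb]

lemma sg_neg (a : ℤ) : sg (-a) = sg a := by
  unfold sg; simp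

lemma sg_sub_four (a b : ℤ) : sg (a - 4 * b) = sg a := by
  unfold sg
  have : Even (a - 4*b) ↔ Even a := by
    constructor <;> intro h
    · have := h.add (⟨2*b, by ring⟩ : Even (4*b)); simpa using this
    · exact h.sub ⟨2*b, by ring⟩
  simp [this]

lemma sg_one : sg 1 = -1 := by decide
lemma sg_zero : sg 0 = 1 := by decide
lemma sg_four_mul (k : ℤ) : sg (4 * k) = 1 := sg_even ⟨2*k, by ring⟩

/-- Concrete model of Γ: `(x, y, a)` represents `u^x v^y t^a`. -/
def G0 : Type := ℤ × ℤ × ℤ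

namespace G0

instance : DecidableEq G0 := inferInstanceAs (DecidableEq (ℤ × ℤ × ℤ))

instance : Mul G0 :=
  ⟨fun g h => (g.1 + sg g.2.2 * h.1, g.2.1 + sg g.2.2 * h.2.1,
      g.2.2 + h.2.2 - 4 * (g.2.1 * (sg g.2.2 * h.1)))⟩
instance : One G0 := ⟨((0:ℤ), (0:ℤ), (0:ℤ))⟩
instance : Inv G0 :=
  ⟨fun g => (-(sg g.2.2 * g.1), -(sg g.2.2 * g.2.1), -g.2.2 - 4 * (g.1 * g.2.1))⟩

lemma mul_def (g h : G0) :
    g * h = (g.1 + sg g.2.2 * h.1, g.2.1 + sg g.2.2 * h.2.1,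
      g.2.2 + h.2.2 - 4 * (g.2.1 * (sg g.2.2 * h.1))) := rfl
lemma one_def : (1 : G0) = ((0:ℤ), (0:ℤ), (0:ℤ)) := rfl
lemma inv_def (g : G0) :
    g⁻¹ = (-(sg g.2.2 * g.1), -(sg g.2.2 * g.2.1), -g.2.2 - 4 * (g.1 * g.2.1)) := rfl

instance : Group G0 where
  mul_assoc g h k := by
    rw [mul_def, mul_def, mul_def g, mul_def]
    obtain ⟨x1, y1, a1⟩ := g; obtain ⟨x2, y2, a2⟩ := h; obtain ⟨x3, y3, a3⟩ := k
    have e1 : (a1 + a2 - 4 * (y1 * (sg a1 * x2))) = (a1 + a2) - 4 * (y1 * (sg a1 * x2)) := rfl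
    refine Prod.ext ?_ (Prod.ext ?_ ?_) <;>
      simp only [mul_def, e1, sg_sub_four, sg_add] <;>
      rcases sg_eq_one_or a1 with h1 | h1 <;> rcases sg_eq_one_or a2 with h2 | h2 <;>
        rw [h1, h2] <;> ring
  one_mul g := by
    rw [mul_def]
    refine Prod.ext ?_ (Prod.ext ?_ ?_) <;> simp [mul_def, one_def, sg_zero]
  mul_one g := by
    rw [mul_def]
    refine Prod.ext ?_ (Prod.ext ?_ ?_) <;> simp [mul_def, one_def]
  inv_mul_cancel g := by
    rw [mul_def, inv_def]
    obtain ⟨x, y, a⟩ := g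
    have e1 : (-a - 4 * (x * y) : ℤ) = -a - 4 * (x * y) := rfl
    have hsg : sg (-a - 4 * (x*y)) = sg a := by
      have : (-a - 4*(x*y) : ℤ) = (-a) - 4 * (x*y) := by ring
      rw [this, sg_sub_four, sg_neg]
    refine Prod.ext ?_ (Prod.ext ?_ ?_) <;>
      simp only [mul_def, inv_def, one_def, hsg] <;>
      rcases sg_eq_one_or a with h1 | h1 <;> rw [h1] <;> ring


def g0 (x y a : ℤ) : G0 := (x, y, a)

def T0 : G0 := g0 0 0 1
def U0 : G0 := g0 1 0 0
def V0 : G0 := g0 0 1 0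

lemma g0_eta (g : G0) : g = g0 g.1 g.2.1 g.2.2 := rfl

lemma g0_mul (x y a X Y A : ℤ) :
    g0 x y a * g0 X Y A = g0 (x + sg a * X) (y + sg a * Y) (a + A - 4 * (y * (sg a * X))) := rfl

lemma g0_one : (1 : G0) = g0 0 0 0 := rfl

lemma g0_inj {x y a x' y' a' : ℤ} (h : g0 x y a = g0 x' y' a') :
    x = x' ∧ y = y' ∧ a = a' :=
  ⟨congrArg Prod.fst h, congrArg (fun p => p.2.1) h, congrArg (fun p => p.2.2) h⟩

lemma g0_congr {x x' y y' a a' : ℤ} (h1 : x = x') (h2 : y = y') (h3 : a = a') :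
    g0 x y a = g0 x' y' a' := by subst h1; subst h2; subst h3; rfl

lemma t_mul (c d : ℤ) : g0 0 0 c * g0 0 0 d = g0 0 0 (c + d) := by
  rw [g0_mul]; norm_num

lemma t_pow (c : ℤ) (n : ℕ) : (g0 0 0 c) ^ n = g0 0 0 ((n:ℤ)*c) := by
  induction n with
  | zero => rw [pow_zero, g0_one]; norm_num
  | succ n ih =>
      rw [pow_succ, ih, t_mul]
      congr 1; push_cast; ring

lemma t_inv (c : ℤ) : (g0 0 0 c)⁻¹ = g0 0 0 (-c) := by
  rw [eq_comm, eq_inv_iff_mul_eq_one, t_mul, g0_one]; norm_num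

lemma t_zpow (c : ℤ) (n : ℤ) : (g0 0 0 c) ^ n = g0 0 0 (n*c) := by
  induction n using Int.induction_on with
  | zero => rw [zpow_zero, g0_one]; norm_num
  | succ n ih =>
      rw [zpow_add_one, ih, t_mul]
      congr 1; push_cast; ring
  | pred n ih =>
      rw [sub_eq_add_neg, zpow_add, ih, zpow_neg, zpow_one, t_inv, t_mul]
      congr 1; push_cast; ring

lemma sq_odd (x y a : ℤ) (h : ¬ Even a) :
    (g0 x y a) ^ (2:ℕ) = g0 0 0 (2*a + 4*(x*y)) := by
  rw [pow_two, g0_mul, sg_odd h]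
  exact g0_congr (by ring) (by ring) (by ring)

lemma pow_even (x y a : ℤ) (h : Even a) (n : ℕ) :
    ∃ c : ℤ, Even c ∧ (g0 x y a) ^ n = g0 ((n:ℤ)*x) ((n:ℤ)*y) c := by
  induction n with
  | zero => exact ⟨0, Even.zero, by rw [pow_zero, g0_one]; norm_num⟩
  | succ n ih =>
      obtain ⟨c, hc, hpow⟩ := ih
      refine ⟨c + a - 4*(((n:ℤ)*y)*x), ((hc.add h).sub ⟨2*(((n:ℤ)*y)*x), by ring⟩), ?_⟩
      rw [pow_succ, hpow, g0_mul, sg_even hc]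
      exact g0_congr (by push_cast; ring) (by push_cast; ring) (by push_cast; ring)

def π2 : G0 →* Multiplicative (ZMod 2) where
  toFun g := Multiplicative.ofAdd ((g.2.2 : ZMod 2))
  map_one' := by simp [g0_one, g0]
  map_mul' g h := by
    have key : (((g.2.2 + h.2.2 - 4 * (g.2.1 * (sg g.2.2 * h.1))) : ℤ) : ZMod 2)
        = ((g.2.2 : ZMod 2) + (h.2.2 : ZMod 2)) := by
      push_cast
      have h4 : (4 : ZMod 2) = 0 := by decide
      rw [h4]; ring
    show Multiplicative.ofAdd (((g.2.2 + h.2.2 - 4 * (g.2.1 * (sg g.2.2 * h.1))) : ℤ) : ZMod 2)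
        = Multiplicative.ofAdd _ * Multiplicative.ofAdd _
    rw [← ofAdd_add, key]

lemma π2_apply (x y a : ℤ) : π2 (g0 x y a) = Multiplicative.ofAdd ((a : ZMod 2)) := rfl

lemma zmod2_ne_zero (z : ZMod 2) (h : z ≠ 0) : z = 1 := by revert h; revert z; decide

lemma two_dvd_even {a : ℤ} (h : (2:ℤ) ∣ a) : Even a := by
  obtain ⟨k, hk⟩ := h; exact ⟨k, by omega⟩

lemma isTorsionFree : ∀ g : G0, g ≠ 1 → ¬IsOfFinOrder g := by
  intro g hg hfin
  obtain ⟨n, hn, hpow0⟩ := isOfFinOrder_iff_pow_eq_one.mp hfin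
  obtain ⟨x, y, a⟩ := g
  have hpow : (g0 x y a) ^ n = g0 0 0 0 := hpow0
  have hnz : (n:ℤ) ≠ 0 := Int.natCast_ne_zero.mpr (by omega)
  by_cases ha : Even a
  · obtain ⟨c, -, hp⟩ := pow_even x y a ha n
    rw [hp] at hpow
    obtain ⟨h1, h2, -⟩ := g0_inj hpow
    have hx : x = 0 := (mul_eq_zero.mp h1).resolve_left hnz
    have hy : y = 0 := (mul_eq_zero.mp h2).resolve_left hnz
    subst hx hy
    have hpow : (g0 0 0 a) ^ n = g0 0 0 0 := hpow0
    rw [t_pow] at hpow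
    obtain ⟨-, -, h3⟩ := g0_inj hpow
    have hazero : a = 0 := (mul_eq_zero.mp h3).resolve_left hnz
    exact hg (by subst hazero; rfl)
  · have hπ : π2 (g0 x y a) ^ n = 1 := by rw [← map_pow, hpow]; rfl
    have heven : Even n := by
      by_contra hodd
      have ha1 : ((a : ZMod 2)) = 1 := by
        refine zmod2_ne_zero _ (fun hz => ha ?_)
        exact two_dvd_even ((ZMod.intCast_zmod_eq_zero_iff_dvd a 2).mp hz)
      have hn1 : ((n : ZMod 2)) = 1 := by
        refine zmod2_ne_zero _ (fun hz => hodd ?_)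
        obtain ⟨k, hk⟩ := (ZMod.natCast_eq_zero_iff n 2).mp hz
        exact ⟨k, by omega⟩
      rw [π2_apply, ← ofAdd_nsmul] at hπ
      have h0 := congrArg Multiplicative.toAdd hπ
      simp only [toAdd_ofAdd, toAdd_one] at h0
      rw [nsmul_eq_mul, ha1, hn1] at h0
      exact absurd h0 (by decide)
    obtain ⟨m, hm⟩ := heven
    have hm2 : n = 2 * m := by omega
    rw [hm2, pow_mul, sq_odd x y a ha, t_pow] at hpow
    obtain ⟨-, -, h3⟩ := g0_inj hpow
    have hca : (2*a+4*(x*y)) ≠ 0 := fun hc => ha ⟨-(x*y), by linarith⟩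
    have hmz : (m:ℤ) = 0 := (mul_eq_zero.mp h3).resolve_right hca
    have : m = 0 := by exact_mod_cast hmz
    omega

end G0

section NLO

def IsLeftOrderableX (G : Type*) [Group G] : Prop :=
  ∃ r : G → G → Prop, IsStrictTotalOrder G r ∧ ∀ a b c : G, r a b → r (c * a) (c * b)

namespace G0

variable {r : G0 → G0 → Prop}

lemma key (hso : IsStrictTotalOrder G0 r)
    (hl : ∀ a b c : G0, r a b → r (c * a) (c * b))
    (ht : r 1 (g0 0 0 1)) : False := by
  haveI := hso
  set P : G0 → Prop := r 1 with hP
  have Pmul : ∀ a b : G0, P a → P b → P (a * b) := by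
    intro a b pa pb
    have h1 : r (a * 1) (a * b) := hl 1 b a pb
    rw [mul_one] at h1
    exact _root_.trans_of r pa h1
  have pair : ∀ a b : G0, P a → P b → a * b = 1 → False := by
    intro a b pa pb hab
    have := Pmul a b pa pb
    rw [hab] at this
    exact irrefl_of r 1 this
  have Hk : ∀ k : ℕ, P (g0 0 0 ((k:ℤ)+1)) := by
    intro k
    induction k with
    | zero => simpa using ht
    | succ k ih =>
        have h1 := Pmul _ _ ih ht
        rw [t_mul] at h1
        have e : ((k+1:ℕ):ℤ)+1 = ((k:ℤ)+1)+1 := by push_cast; ring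
        rw [e]
        exact h1
  have Htn : ∀ n : ℤ, 0 < n → P (g0 0 0 n) := by
    intro n hn
    obtain ⟨k, rfl⟩ : ∃ k : ℕ, n = (k:ℤ)+1 := ⟨(n-1).toNat, by omega⟩
    exact Hk k
  have odd_pos : ∀ x y a : ℤ, ¬ Even a → 0 < a + 2*(x*y) → P (g0 x y a) := by
    intro x y a ha hpos
    rcases trichotomous_of r 1 (g0 x y a) with h | h | h
    · exact h
    · exfalso
      have h3 : (0:ℤ) = a := (g0_inj (g0_one.symm.trans h)).2.2
      exact ha ⟨0, by omega⟩
    · exfalso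
      -- r (g0 x y a) 1 : multiply on the left by the inverse g' = (x, y, -a-4xy)
      have hodd' : ¬ Even (-a - 4*(x*y)) := by
        intro he
        have h2 : Even ((-a - 4*(x*y)) + 4*(x*y)) := he.add ⟨2*(x*y), by ring⟩
        have h3 : ((-a - 4*(x*y)) + 4*(x*y)) = -a := by ring
        rw [h3] at h2
        exact ha (by simpa using h2)
      have hg' : g0 x y (-a - 4*(x*y)) * g0 x y a = 1 := by
        rw [g0_mul, sg_odd hodd', g0_one]
        exact g0_congr (by ring) (by ring) (by ring)
      have h1 : r (g0 x y (-a - 4*(x*y)) * g0 x y a) (g0 x y (-a - 4*(x*y)) * 1) :=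
        hl _ _ _ h
      rw [mul_one, hg'] at h1
      have pg' : P (g0 x y (-a - 4*(x*y))) := h1
      have sq' : g0 x y (-a - 4*(x*y)) * g0 x y (-a - 4*(x*y))
          = g0 0 0 (-(2*a + 4*(x*y))) := by
        rw [g0_mul, sg_odd hodd']
        exact g0_congr (by ring) (by ring) (by ring)
      have psq' : P (g0 0 0 (-(2*a + 4*(x*y)))) := by
        have := Pmul _ _ pg' pg'
        rw [sq'] at this
        exact this
      have ppos : P (g0 0 0 (2*a + 4*(x*y))) := Htn _ (by linarith)
      refine pair _ _ psq' ppos ?_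
      rw [t_mul, g0_one]
      exact g0_congr rfl rfl (by ring)
  -- the contradiction triple
  have p1 : P (g0 (-2) 0 1) := odd_pos _ _ _ (by decide) (by norm_num)
  have p2 : P (g0 0 (-1) 1) := odd_pos _ _ _ (by decide) (by norm_num)
  have p3 : P (g0 0 0 1) := ht
  have p4 : P (g0 (-2) 1 5) := odd_pos _ _ _ (by decide) (by norm_num)
  have hprod : g0 (-2) 0 1 * g0 0 (-1) 1 * g0 0 0 1 * g0 (-2) 1 5 = 1 := by decide
  exact pair _ _ (Pmul _ _ (Pmul _ _ p1 p2) p3) p4 hprod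

lemma not_leftOrderable : ¬ IsLeftOrderableX G0 := by
  rintro ⟨r, hso, hl⟩
  haveI := hso
  rcases trichotomous_of r 1 (g0 0 0 1) with h | h | h
  · exact key hso hl h
  · exact absurd (g0_inj (g0_one.symm.trans h)).2.2 (by decide)
  · -- use the opposite order
    have hso' : IsStrictTotalOrder G0 (fun a b => r b a) :=
      { irrefl := fun a => irrefl_of r a
        trans := fun a b c hab hbc => _root_.trans_of r hbc hab
        trichotomous := fun a b n1 n2 => by
          rcases trichotomous_of r a b with h' | h' | h'
          · exact absurd h' n2
          · exact h'
          · exact absurd h' n1 }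
    exact key hso' (fun a b c hab => hl b a c hab) h

end G0

end NLO

section ConjGeneric

variable {G : Type*} [Group G]

lemma conj_zpow_gen (t w : G) (h : t * w * t⁻¹ = w⁻¹) (x : ℤ) :
    t * w ^ x * t⁻¹ = w ^ (-x) := by
  rw [show t * w ^ x * t⁻¹ = (t * w * t⁻¹) ^ x from conj_zpow.symm, h, inv_zpow, zpow_neg]

lemma conj_mul_gen (t w : G) (h : t * w * t⁻¹ = w⁻¹) (x : ℤ) :
    t * w ^ x = w ^ (-x) * t := by
  rw [← conj_zpow_gen t w h x]; group

lemma inv_conj_mul_gen (t w : G) (h : t * w * t⁻¹ = w⁻¹) (x : ℤ) :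
    t⁻¹ * w ^ x = w ^ (-x) * t⁻¹ := by
  have h2 := conj_zpow_gen t w h (-x)
  rw [neg_neg] at h2
  rw [← h2]; group

lemma pow_conj_zpow (t w : G) (h : t * w * t⁻¹ = w⁻¹) (a : ℤ) :
    ∀ x : ℤ, t ^ a * w ^ x = w ^ (sg a * x) * t ^ a := by
  induction a using Int.induction_on with
  | zero => intro x; rw [sg_zero]; simp
  | succ n ih =>
      intro x
      have e : sg ((n:ℤ) + 1) * x = sg (n:ℤ) * (-x) := by rw [sg_add, sg_one]; ring
      calc t ^ ((n:ℤ)+1) * w ^ x = t ^ (n:ℤ) * (t * w ^ x) := by rw [zpow_add_one]; group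
        _ = t ^ (n:ℤ) * (w ^ (-x) * t) := by rw [conj_mul_gen t w h]
        _ = (t ^ (n:ℤ) * w ^ (-x)) * t := by group
        _ = (w ^ (sg (n:ℤ) * (-x)) * t ^ (n:ℤ)) * t := by rw [ih]
        _ = w ^ (sg ((n:ℤ)+1) * x) * t ^ ((n:ℤ)+1) := by rw [e, zpow_add_one]; group
  | pred n ih =>
      intro x
      have e : sg (-(n:ℤ) - 1) * x = sg (-(n:ℤ)) * (-x) := by
        rw [show (-(n:ℤ) - 1 : ℤ) = -(n:ℤ) + (-1) from by ring, sg_add, sg_neg (1 : ℤ), sg_one]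
        ring
      calc t ^ (-(n:ℤ)-1) * w ^ x = t ^ (-(n:ℤ)) * (t⁻¹ * w ^ x) := by rw [zpow_sub_one]; group
        _ = t ^ (-(n:ℤ)) * (w ^ (-x) * t⁻¹) := by rw [inv_conj_mul_gen t w h]
        _ = (t ^ (-(n:ℤ)) * w ^ (-x)) * t⁻¹ := by group
        _ = (w ^ (sg (-(n:ℤ)) * (-x)) * t ^ (-(n:ℤ))) * t⁻¹ := by rw [ih]
        _ = w ^ (sg (-(n:ℤ)-1) * x) * t ^ (-(n:ℤ)-1) := by rw [e, zpow_sub_one]; group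

end ConjGeneric

section GammaGroup

abbrev Γ : Type := PresentedGroup ΓRels

def Tg : Γ := PresentedGroup.of ΓGen.t
def Ug : Γ := PresentedGroup.of ΓGen.u
def Vg : Γ := PresentedGroup.of ΓGen.v

lemma rel_mk {r : FreeGroup ΓGen} (h : r ∈ ΓRels) : PresentedGroup.mk ΓRels r = 1 :=
  (QuotientGroup.eq_one_iff r).mpr (Subgroup.subset_normalClosure h)

lemma rel1 : Ug * Vg * Ug⁻¹ * Vg⁻¹ = Tg ^ (4:ℤ) := by
  have h := rel_mk (Set.mem_insert _ _)
  simp only [map_mul, map_inv, map_pow] at h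
  rw [mul_inv_eq_one] at h
  rw [show ((4:ℤ) : ℤ) = ((4:ℕ) : ℤ) from rfl, zpow_natCast]
  exact h

lemma rel2 : Tg * Ug * Tg⁻¹ = Ug⁻¹ := by
  have h := rel_mk (Set.mem_insert_of_mem _ (Set.mem_insert _ _))
  simp only [map_mul, map_inv] at h
  exact mul_eq_one_iff_eq_inv.mp h

lemma rel3 : Tg * Vg * Tg⁻¹ = Vg⁻¹ := by
  have h := rel_mk (Set.mem_insert_of_mem _ (Set.mem_insert_of_mem _ rfl))
  simp only [map_mul, map_inv] at h
  exact mul_eq_one_iff_eq_inv.mp h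

lemma TU (a x : ℤ) : Tg ^ a * Ug ^ x = Ug ^ (sg a * x) * Tg ^ a :=
  pow_conj_zpow Tg Ug rel2 a x

lemma TV (a y : ℤ) : Tg ^ a * Vg ^ y = Vg ^ (sg a * y) * Tg ^ a :=
  pow_conj_zpow Tg Vg rel3 a y

lemma c4U (k x : ℤ) : Tg ^ (4*k) * Ug ^ x = Ug ^ x * Tg ^ (4*k) := by
  rw [TU, sg_four_mul, one_mul]

lemma c4V (k y : ℤ) : Tg ^ (4*k) * Vg ^ y = Vg ^ y * Tg ^ (4*k) := by
  rw [TV, sg_four_mul, one_mul]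

lemma VU1 : Vg * Ug = Ug * Vg * Tg ^ (4*(-1:ℤ)) := by
  have h1 : Ug * Vg = Tg ^ (4:ℤ) * (Vg * Ug) := by rw [← rel1]; group
  have h2 : Tg ^ (4*(-1:ℤ)) * (Ug * Vg) = Vg * Ug := by
    rw [h1, show (4*(-1:ℤ)) = -(4:ℤ) from by ring]; group
  calc Vg * Ug = Tg ^ (4*(-1:ℤ)) * (Ug * Vg) := h2.symm
    _ = Tg ^ (4*(-1:ℤ)) * Ug ^ (1:ℤ) * Vg := by group
    _ = Ug ^ (1:ℤ) * Tg ^ (4*(-1:ℤ)) * Vg := by rw [c4U]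
    _ = Ug * (Tg ^ (4*(-1:ℤ)) * Vg ^ (1:ℤ)) := by group
    _ = Ug * (Vg ^ (1:ℤ) * Tg ^ (4*(-1:ℤ))) := by rw [c4V]
    _ = Ug * Vg * Tg ^ (4*(-1:ℤ)) := by group

lemma UV1 : Ug * Vg = Vg * Ug * Tg ^ (4*(1:ℤ)) := by
  rw [VU1, show (4*(-1:ℤ)) = -(4*(1:ℤ)) from by ring]; group

lemma VinvU : Vg⁻¹ * Ug = Ug * Vg⁻¹ * Tg ^ (4*(1:ℤ)) := by
  calc Vg⁻¹ * Ug = Vg⁻¹ * (Ug * Vg) * Vg⁻¹ := by group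
    _ = Vg⁻¹ * (Vg * Ug * Tg ^ (4*(1:ℤ))) * Vg⁻¹ := by rw [UV1]
    _ = Ug * (Tg ^ (4*(1:ℤ)) * Vg ^ (-1:ℤ)) := by group
    _ = Ug * (Vg ^ (-1:ℤ) * Tg ^ (4*(1:ℤ))) := by rw [c4V]
    _ = Ug * Vg⁻¹ * Tg ^ (4*(1:ℤ)) := by group

lemma VyU : ∀ y : ℤ, Vg ^ y * Ug = Ug * Vg ^ y * Tg ^ (4*(-y)) := by
  intro y
  induction y using Int.induction_on with
  | zero => simp
  | succ n ih =>
      calc Vg ^ ((n:ℤ)+1) * Ug = Vg ^ (n:ℤ) * (Vg * Ug) := by rw [zpow_add_one]; group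
        _ = Vg ^ (n:ℤ) * (Ug * Vg * Tg ^ (4*(-1:ℤ))) := by rw [VU1]
        _ = (Vg ^ (n:ℤ) * Ug) * Vg * Tg ^ (4*(-1:ℤ)) := by group
        _ = (Ug * Vg ^ (n:ℤ) * Tg ^ (4*(-(n:ℤ)))) * Vg * Tg ^ (4*(-1:ℤ)) := by rw [ih]
        _ = Ug * Vg ^ (n:ℤ) * (Tg ^ (4*(-(n:ℤ))) * Vg ^ (1:ℤ)) * Tg ^ (4*(-1:ℤ)) := by group
        _ = Ug * Vg ^ (n:ℤ) * (Vg ^ (1:ℤ) * Tg ^ (4*(-(n:ℤ)))) * Tg ^ (4*(-1:ℤ)) := by rw [c4V]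
        _ = Ug * (Vg ^ (n:ℤ) * Vg ^ (1:ℤ)) * (Tg ^ (4*(-(n:ℤ))) * Tg ^ (4*(-1:ℤ))) := by group
        _ = Ug * Vg ^ ((n:ℤ)+1) * Tg ^ (4*(-((n:ℤ)+1))) := by
            rw [← zpow_add, ← zpow_add,
              show 4*(-(n:ℤ)) + 4*(-1:ℤ) = 4*(-((n:ℤ)+1)) from by ring]
  | pred n ih =>
      calc Vg ^ (-(n:ℤ)-1) * Ug = Vg ^ (-(n:ℤ)) * (Vg⁻¹ * Ug) := by rw [zpow_sub_one]; group
        _ = Vg ^ (-(n:ℤ)) * (Ug * Vg⁻¹ * Tg ^ (4*(1:ℤ))) := by rw [VinvU]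
        _ = (Vg ^ (-(n:ℤ)) * Ug) * Vg⁻¹ * Tg ^ (4*(1:ℤ)) := by group
        _ = (Ug * Vg ^ (-(n:ℤ)) * Tg ^ (4*(-(-(n:ℤ))))) * Vg⁻¹ * Tg ^ (4*(1:ℤ)) := by rw [ih]
        _ = Ug * Vg ^ (-(n:ℤ)) * (Tg ^ (4*(-(-(n:ℤ)))) * Vg ^ (-1:ℤ)) * Tg ^ (4*(1:ℤ)) := by
            group
        _ = Ug * Vg ^ (-(n:ℤ)) * (Vg ^ (-1:ℤ) * Tg ^ (4*(-(-(n:ℤ))))) * Tg ^ (4*(1:ℤ)) := by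
            rw [c4V]
        _ = Ug * (Vg ^ (-(n:ℤ)) * Vg ^ (-1:ℤ)) * (Tg ^ (4*(-(-(n:ℤ)))) * Tg ^ (4*(1:ℤ))) := by
            group
        _ = Ug * Vg ^ (-(n:ℤ)-1) * Tg ^ (4*(-(-(n:ℤ)-1))) := by
            rw [← zpow_add, ← zpow_add,
              show 4*(-(-(n:ℤ))) + 4*(1:ℤ) = 4*(-(-(n:ℤ)-1)) from by ring,
              show -(n:ℤ) + (-1:ℤ) = -(n:ℤ)-1 from by ring]

lemma UinvVy (y : ℤ) : Ug⁻¹ * Vg ^ y = Vg ^ y * Tg ^ (4*(-y)) * Ug⁻¹ := by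
  calc Ug⁻¹ * Vg ^ y = Ug⁻¹ * (Vg ^ y * Ug) * Ug⁻¹ := by group
    _ = Ug⁻¹ * (Ug * Vg ^ y * Tg ^ (4*(-y))) * Ug⁻¹ := by rw [VyU]
    _ = Vg ^ y * Tg ^ (4*(-y)) * Ug⁻¹ := by group

lemma VyUinv (y : ℤ) : Vg ^ y * Ug⁻¹ = Ug⁻¹ * Vg ^ y * Tg ^ (4*y) := by
  calc Vg ^ y * Ug⁻¹ = Vg ^ y * Tg ^ (4*(-y)) * (Tg ^ (4*y) * Ug ^ (-1:ℤ)) := by group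
    _ = Vg ^ y * Tg ^ (4*(-y)) * (Ug ^ (-1:ℤ) * Tg ^ (4*y)) := by rw [c4U]
    _ = (Vg ^ y * Tg ^ (4*(-y)) * Ug⁻¹) * Tg ^ (4*y) := by group
    _ = (Ug⁻¹ * Vg ^ y) * Tg ^ (4*y) := by rw [← UinvVy]
    _ = Ug⁻¹ * Vg ^ y * Tg ^ (4*y) := by group

lemma VU (y : ℤ) : ∀ x : ℤ, Vg ^ y * Ug ^ x = Ug ^ x * Vg ^ y * Tg ^ (4*(-(x*y))) := by
  intro x
  induction x using Int.induction_on with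
  | zero => simp
  | succ n ih =>
      calc Vg ^ y * Ug ^ ((n:ℤ)+1) = (Vg ^ y * Ug ^ (n:ℤ)) * Ug := by rw [zpow_add_one]; group
        _ = (Ug ^ (n:ℤ) * Vg ^ y * Tg ^ (4*(-((n:ℤ)*y)))) * Ug := by rw [ih]
        _ = Ug ^ (n:ℤ) * (Vg ^ y * (Tg ^ (4*(-((n:ℤ)*y))) * Ug ^ (1:ℤ))) := by group
        _ = Ug ^ (n:ℤ) * (Vg ^ y * (Ug ^ (1:ℤ) * Tg ^ (4*(-((n:ℤ)*y))))) := by rw [c4U]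
        _ = Ug ^ (n:ℤ) * ((Vg ^ y * Ug) * Tg ^ (4*(-((n:ℤ)*y)))) := by group
        _ = Ug ^ (n:ℤ) * ((Ug * Vg ^ y * Tg ^ (4*(-y))) * Tg ^ (4*(-((n:ℤ)*y)))) := by rw [VyU]
        _ = (Ug ^ (n:ℤ) * Ug ^ (1:ℤ)) * Vg ^ y * (Tg ^ (4*(-y)) * Tg ^ (4*(-((n:ℤ)*y)))) := by
            group
        _ = Ug ^ ((n:ℤ)+1) * Vg ^ y * Tg ^ (4*(-(((n:ℤ)+1)*y))) := by
            rw [← zpow_add, ← zpow_add,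
              show 4*(-y) + 4*(-((n:ℤ)*y)) = 4*(-(((n:ℤ)+1)*y)) from by ring]
  | pred n ih =>
      calc Vg ^ y * Ug ^ (-(n:ℤ)-1) = (Vg ^ y * Ug ^ (-(n:ℤ))) * Ug⁻¹ := by
            rw [zpow_sub_one]; group
        _ = (Ug ^ (-(n:ℤ)) * Vg ^ y * Tg ^ (4*(-(-(n:ℤ)*y)))) * Ug⁻¹ := by rw [ih]
        _ = Ug ^ (-(n:ℤ)) * (Vg ^ y * (Tg ^ (4*(-(-(n:ℤ)*y))) * Ug ^ (-1:ℤ))) := by group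
        _ = Ug ^ (-(n:ℤ)) * (Vg ^ y * (Ug ^ (-1:ℤ) * Tg ^ (4*(-(-(n:ℤ)*y))))) := by rw [c4U]
        _ = Ug ^ (-(n:ℤ)) * ((Vg ^ y * Ug⁻¹) * Tg ^ (4*(-(-(n:ℤ)*y)))) := by group
        _ = Ug ^ (-(n:ℤ)) * ((Ug⁻¹ * Vg ^ y * Tg ^ (4*y)) * Tg ^ (4*(-(-(n:ℤ)*y)))) := by
            rw [VyUinv]
        _ = (Ug ^ (-(n:ℤ)) * Ug ^ (-1:ℤ)) * Vg ^ y * (Tg ^ (4*y) * Tg ^ (4*(-(-(n:ℤ)*y)))) := by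
            group
        _ = Ug ^ (-(n:ℤ)-1) * Vg ^ y * Tg ^ (4*(-((-(n:ℤ)-1)*y))) := by
            rw [← zpow_add, ← zpow_add,
              show 4*y + 4*(-(-(n:ℤ)*y)) = 4*(-((-(n:ℤ)-1)*y)) from by ring,
              show -(n:ℤ) + (-1:ℤ) = -(n:ℤ)-1 from by ring]

end GammaGroup

section PsiPhi

open G0 in
def ψfun : G0 → Γ := fun g => Ug ^ g.1 * Vg ^ g.2.1 * Tg ^ g.2.2

lemma ψfun_g0 (x y a : ℤ) : ψfun (G0.g0 x y a) = Ug ^ x * Vg ^ y * Tg ^ a := rfl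

lemma ψfun_mul (g h : G0) : ψfun (g * h) = ψfun g * ψfun h := by
  obtain ⟨x, y, a⟩ := g
  obtain ⟨X, Y, A⟩ := h
  show ψfun (G0.g0 x y a * G0.g0 X Y A) = ψfun (G0.g0 x y a) * ψfun (G0.g0 X Y A)
  rw [G0.g0_mul, ψfun_g0, ψfun_g0, ψfun_g0]
  refine Eq.symm ?_
  calc (Ug ^ x * Vg ^ y * Tg ^ a) * (Ug ^ X * Vg ^ Y * Tg ^ A)
      = Ug ^ x * (Vg ^ y * ((Tg ^ a * Ug ^ X) * ((Tg ^ a)⁻¹ * ((Tg ^ a * Vg ^ Y) *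
          ((Tg ^ a)⁻¹ * (Tg ^ a * Tg ^ A)))))) := by group
    _ = Ug ^ x * (Vg ^ y * ((Ug ^ (sg a * X) * Tg ^ a) * ((Tg ^ a)⁻¹ *
          ((Vg ^ (sg a * Y) * Tg ^ a) * ((Tg ^ a)⁻¹ * (Tg ^ a * Tg ^ A)))))) := by
        rw [TU, TV]
    _ = Ug ^ x * ((Vg ^ y * Ug ^ (sg a * X)) * (Vg ^ (sg a * Y) * (Tg ^ a * Tg ^ A))) := by
        group
    _ = Ug ^ x * ((Ug ^ (sg a * X) * Vg ^ y * Tg ^ (4 * (-(sg a * X * y)))) *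
          (Vg ^ (sg a * Y) * (Tg ^ a * Tg ^ A))) := by rw [VU]
    _ = Ug ^ x * (Ug ^ (sg a * X) * (Vg ^ y * ((Tg ^ (4 * (-(sg a * X * y))) *
          Vg ^ (sg a * Y)) * (Tg ^ a * Tg ^ A)))) := by group
    _ = Ug ^ x * (Ug ^ (sg a * X) * (Vg ^ y * ((Vg ^ (sg a * Y) *
          Tg ^ (4 * (-(sg a * X * y)))) * (Tg ^ a * Tg ^ A)))) := by rw [c4V]
    _ = Ug ^ (x + sg a * X) * Vg ^ (y + sg a * Y) * Tg ^ (a + A - 4 * (y * (sg a * X))) := by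
        rw [zpow_add, zpow_add,
          show (a + A - 4 * (y * (sg a * X)) : ℤ) = 4 * (-(sg a * X * y)) + (a + A) from by ring,
          zpow_add, zpow_add]
        group

def ψ : G0 →* Γ := MonoidHom.mk' ψfun ψfun_mul

lemma ψ_g0 (x y a : ℤ) : ψ (G0.g0 x y a) = Ug ^ x * Vg ^ y * Tg ^ a := rfl

def fgen : ΓGen → G0
  | ΓGen.t => G0.T0
  | ΓGen.u => G0.U0
  | ΓGen.v => G0.V0

lemma frels : ∀ r ∈ ΓRels, FreeGroup.lift fgen r = 1 := by
  intro r hr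
  rcases hr with h | h | h <;> subst h <;>
    simp only [map_mul, map_inv, map_pow, FreeGroup.lift_apply_of] <;> decide

def φ : Γ →* G0 := PresentedGroup.toGroup frels

lemma φ_T : φ Tg = G0.T0 := PresentedGroup.toGroup.of frels
lemma φ_U : φ Ug = G0.U0 := PresentedGroup.toGroup.of frels
lemma φ_V : φ Vg = G0.V0 := PresentedGroup.toGroup.of frels

lemma ψφ (z : Γ) : ψ (φ z) = z := by
  have h : (ψ.comp φ) = MonoidHom.id Γ := by
    refine PresentedGroup.ext fun g => ?_
    cases g <;>
      simp only [MonoidHom.comp_apply, MonoidHom.id_apply] <;>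
      [ (show ψ (φ Tg) = Tg); (show ψ (φ Ug) = Ug); (show ψ (φ Vg) = Vg) ]
    · rw [φ_T]; show ψ (G0.g0 0 0 1) = Tg
      rw [ψ_g0]; simp
    · rw [φ_U]; show ψ (G0.g0 1 0 0) = Ug
      rw [ψ_g0]; simp
    · rw [φ_V]; show ψ (G0.g0 0 1 0) = Vg
      rw [ψ_g0]; simp
  exact DFunLike.congr_fun h z

lemma φ_inj : Function.Injective φ := by
  intro a b hab
  have := congrArg ψ hab
  rwa [ψφ, ψφ] at this

open G0 in
lemma U0_zpow (x : ℤ) : (G0.U0 : G0) ^ x = G0.g0 x 0 0 := by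
  induction x using Int.induction_on with
  | zero => rfl
  | succ n ih =>
      rw [zpow_add_one, ih]
      show g0 n 0 0 * g0 1 0 0 = _
      rw [g0_mul]
      exact g0_congr (by rw [sg_zero]; ring) (by rw [sg_zero]; ring) (by rw [sg_zero]; ring)
  | pred n ih =>
      rw [zpow_sub_one, ih]
      have hU : (G0.U0)⁻¹ = g0 (-1) 0 0 := by
        rw [eq_comm, eq_inv_iff_mul_eq_one]
        show g0 (-1) 0 0 * g0 1 0 0 = 1
        rw [g0_mul, g0_one]
        exact g0_congr (by rw [sg_zero]; ring) (by rw [sg_zero]; ring) (by rw [sg_zero]; ring)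
      rw [hU]
      show g0 (-n) 0 0 * g0 (-1) 0 0 = _
      rw [g0_mul]
      exact g0_congr (by rw [sg_zero]; ring) (by rw [sg_zero]; ring) (by rw [sg_zero]; ring)

open G0 in
lemma V0_zpow (y : ℤ) : (G0.V0 : G0) ^ y = G0.g0 0 y 0 := by
  induction y using Int.induction_on with
  | zero => rfl
  | succ n ih =>
      rw [zpow_add_one, ih]
      show g0 0 n 0 * g0 0 1 0 = _
      rw [g0_mul]
      exact g0_congr (by rw [sg_zero]; ring) (by rw [sg_zero]; ring) (by rw [sg_zero]; ring)
  | pred n ih =>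
      rw [zpow_sub_one, ih]
      have hV : (G0.V0)⁻¹ = g0 0 (-1) 0 := by
        rw [eq_comm, eq_inv_iff_mul_eq_one]
        show g0 0 (-1) 0 * g0 0 1 0 = 1
        rw [g0_mul, g0_one]
        exact g0_congr (by rw [sg_zero]; ring) (by rw [sg_zero]; ring) (by rw [sg_zero]; ring)
      rw [hV]
      show g0 0 (-n) 0 * g0 0 (-1) 0 = _
      rw [g0_mul]
      exact g0_congr (by rw [sg_zero]; ring) (by rw [sg_zero]; ring) (by rw [sg_zero]; ring)

open G0 in
lemma T0_zpow (a : ℤ) : (G0.T0 : G0) ^ a = G0.g0 0 0 a := by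
  have := G0.t_zpow 1 a
  rw [show G0.g0 0 0 1 = G0.T0 from rfl] at this
  rw [this]
  exact g0_congr rfl rfl (by ring)

open G0 in
lemma φψ (g : G0) : φ (ψ g) = g := by
  obtain ⟨x, y, a⟩ := g
  show φ (ψ (g0 x y a)) = g0 x y a
  rw [ψ_g0, map_mul, map_mul, map_zpow, map_zpow, map_zpow, φ_T, φ_U, φ_V,
    U0_zpow, V0_zpow, T0_zpow, g0_mul, g0_mul]
  exact g0_congr (by simp [sg_zero]) (by simp [sg_zero]) (by simp [sg_zero])

lemma φ_surj : Function.Surjective φ := fun g => ⟨ψ g, φψ g⟩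

noncomputable def eΓ : Γ ≃* G0 := MulEquiv.ofBijective φ ⟨φ_inj, φ_surj⟩

lemma eΓ_coe (z : Γ) : eΓ z = φ z := rfl

end PsiPhi

section SubgroupPart

def K0 : Subgroup G0 := G0.π2.ker

lemma π2_surj : Function.Surjective G0.π2 := by
  intro c
  obtain ⟨a, ha⟩ := ZMod.intCast_surjective (Multiplicative.toAdd c)
  exact ⟨G0.g0 0 0 a, by rw [G0.π2_apply, ha]; rfl⟩

lemma K0_index : K0.index = 2 := by
  rw [K0, Subgroup.index_ker, MonoidHom.range_eq_top.mpr π2_surj]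
  rw [Nat.card_congr Subgroup.topEquiv.toEquiv, Nat.card_eq_fintype_card]
  rfl

lemma mem_K0 {g : G0} (h : g ∈ K0) : (2:ℤ) ∣ g.2.2 := by
  have h1 : Multiplicative.ofAdd ((g.2.2 : ZMod 2)) = 1 := h
  have h2 : ((g.2.2 : ZMod 2)) = 0 := congrArg Multiplicative.toAdd h1
  exact (ZMod.intCast_zmod_eq_zero_iff_dvd _ 2).mp h2

lemma mem_K0' {g : G0} (h : (2:ℤ) ∣ g.2.2) : g ∈ K0 := by
  show Multiplicative.ofAdd ((g.2.2 : ZMod 2)) = 1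
  have h2 : ((g.2.2 : ZMod 2)) = 0 := (ZMod.intCast_zmod_eq_zero_iff_dvd _ 2).mpr h
  rw [h2]; rfl

/-- Packing a triple of integers as an element of `Heis`. -/
def hmk (p q r : ℤ) : Heis := (p, q, r)

lemma hmk_mul (p q r p' q' r' : ℤ) :
    hmk p q r * hmk p' q' r' = hmk (p + p') (q + q') (r + r' + p * q') := rfl

lemma hmk_congr {p q r p' q' r' : ℤ} (h1 : p = p') (h2 : q = q') (h3 : r = r') :
    hmk p q r = hmk p' q' r' := by subst h1; subst h2; subst h3; rfl

/-- The embedding of the even part of `G0` into the Heisenberg group. -/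
def jhom : ↥K0 →* Heis where
  toFun g := hmk (g : G0).2.1 (-2 * (g : G0).1) ((g : G0).2.2 / 2)
  map_one' := by
    show hmk (1:G0).2.1 (-2 * (1:G0).1) ((1:G0).2.2 / 2) = 1
    rw [G0.one_def]
    show hmk _ _ _ = hmk 0 0 0
    exact hmk_congr (by norm_num) (by norm_num) (by norm_num)
  map_mul' g h := by
    obtain ⟨a', ha⟩ := mem_K0 g.2
    obtain ⟨A', hA⟩ := mem_K0 h.2
    have hsg : sg (g : G0).2.2 = 1 := sg_even ⟨a', by omega⟩
    show hmk ((g:G0) * (h:G0)).2.1 (-2 * ((g:G0) * (h:G0)).1) (((g:G0) * (h:G0)).2.2 / 2) =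
      hmk (g:G0).2.1 (-2 * (g:G0).1) ((g:G0).2.2 / 2) *
        hmk (h:G0).2.1 (-2 * (h:G0).1) ((h:G0).2.2 / 2)
    rw [hmk_mul, G0.mul_def, hsg]
    refine hmk_congr (by ring) (by ring) ?_
    rw [ha, hA]
    have e1 : (2*a' + 2*A' - 4*((g:G0).2.1 * (1 * (h:G0).1)))
        = 2 * (a' + A' - 2*((g:G0).2.1 * (h:G0).1)) := by ring
    rw [e1, Int.mul_ediv_cancel_left _ (by norm_num), Int.mul_ediv_cancel_left _ (by norm_num),
      Int.mul_ediv_cancel_left _ (by norm_num)]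
    ring

lemma j_inj : Function.Injective jhom := by
  intro g h hgh
  obtain ⟨a', ha⟩ := mem_K0 g.2
  obtain ⟨A', hA⟩ := mem_K0 h.2
  have h1 : (g:G0).2.1 = (h:G0).2.1 := congrArg (fun p : Heis => p.1) hgh
  have h2 : -2 * (g:G0).1 = -2 * (h:G0).1 := congrArg (fun p : Heis => p.2.1) hgh
  have h3 : (g:G0).2.2 / 2 = (h:G0).2.2 / 2 := congrArg (fun p : Heis => p.2.2) hgh
  refine Subtype.ext (Prod.ext ?_ (Prod.ext ?_ ?_))
  · omega
  · exact h1
  · rw [ha, hA] at h3 ⊢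
    omega

def πH : Heis →* Multiplicative (ZMod 2) where
  toFun h := Multiplicative.ofAdd ((h.2.1 : ZMod 2))
  map_one' := by
    show Multiplicative.ofAdd (((0:ℤ) : ZMod 2)) = 1
    norm_num
  map_mul' g h := by
    show Multiplicative.ofAdd (((g.2.1 + h.2.1 : ℤ) : ZMod 2)) = _
    rw [← ofAdd_add]
    congr 1
    push_cast
    ring

lemma range_j : jhom.range = πH.ker := by
  ext p
  constructor
  · rintro ⟨g, rfl⟩
    show Multiplicative.ofAdd (((-2 * (g:G0).1 : ℤ) : ZMod 2)) = 1
    have h0 : ((-2 * (g:G0).1 : ℤ) : ZMod 2) = 0 :=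
      (ZMod.intCast_zmod_eq_zero_iff_dvd _ 2).mpr ⟨-(g:G0).1, by ring⟩
    rw [h0]; rfl
  · intro hp
    have h2 : ((p.2.1 : ZMod 2)) = 0 := congrArg Multiplicative.toAdd hp
    obtain ⟨k, hk⟩ := (ZMod.intCast_zmod_eq_zero_iff_dvd _ 2).mp h2
    refine ⟨⟨G0.g0 (-k) p.1 (2*p.2.2), mem_K0' ⟨p.2.2, rfl⟩⟩, ?_⟩
    show hmk p.1 (-2*(-k)) ((2*p.2.2)/2) = p
    have e1 : (-2*(-k) : ℤ) = p.2.1 := by omega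
    have e2 : ((2*p.2.2)/2 : ℤ) = p.2.2 := by omega
    rw [show p = hmk p.1 p.2.1 p.2.2 from rfl] 
    exact hmk_congr rfl e1 e2

lemma L_index : jhom.range.index ≠ 0 := by
  rw [range_j, Subgroup.index_ker]
  exact Nat.card_pos.ne'

noncomputable def Kdef : Subgroup Γ := K0.comap (eΓ : Γ →* G0)

lemma eΓ_hom_surj : Function.Surjective (eΓ : Γ →* G0) := eΓ.surjective

lemma K_index : Kdef.index = 2 := by
  rw [Kdef]
  exact (Subgroup.index_comap_of_surjective K0 eΓ_hom_surj).trans K0_index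

noncomputable def isoK : ↥Kdef ≃* ↥jhom.range :=
  ((eΓ.subgroupMap Kdef).trans (MulEquiv.subgroupCongr
    (Subgroup.map_comap_eq_self_of_surjective eΓ_hom_surj K0))).trans
    (MonoidHom.ofInjective j_inj)

lemma Γ_torsionFree : ∀ g : Γ, g ≠ 1 → ¬IsOfFinOrder g := by
  intro g hg hfin
  exact G0.isTorsionFree (φ g) (fun h1 => hg (φ_inj (h1.trans (map_one φ).symm)))
    (φ.isOfFinOrder hfin)

end SubgroupPart

end Stmt15Aux

/-- `Γ = ⟨t, u, v | [u,v] = t⁴, t u t⁻¹ = u⁻¹, t v t⁻¹ = v⁻¹⟩` is a torsion-free group,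
which contains an index-two subgroup isomorphic to a finite-index subgroup of the
Heisenberg group, and which is not left-orderable. -/
theorem stmt_15 :
    (∀ g : PresentedGroup ΓRels, g ≠ 1 → ¬IsOfFinOrder g) ∧
    (∃ K : Subgroup (PresentedGroup ΓRels), K.index = 2 ∧
      ∃ L : Subgroup Heis, L.index ≠ 0 ∧ Nonempty (K ≃* L)) ∧
    ¬ IsLeftOrderable (PresentedGroup ΓRels) := by
  constructor
  · exact Stmt15Aux.Γ_torsionFree
  constructor
  · exact ⟨Stmt15Aux.Kdef, Stmt15Aux.K_index, Stmt15Aux.jhom.range, Stmt15Aux.L_index,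
      ⟨Stmt15Aux.isoK⟩⟩
  · rintro ⟨r, hso, hl⟩
    haveI := hso
    refine Stmt15Aux.G0.not_leftOrderable
      ⟨fun a b => r (Stmt15Aux.eΓ.symm a) (Stmt15Aux.eΓ.symm b), ?_, ?_⟩
    · exact
        { irrefl := fun a => irrefl_of r _
          trans := fun a b c h1 h2 => _root_.trans_of r h1 h2
          trichotomous := fun a b n1 n2 => by
            rcases trichotomous_of r (Stmt15Aux.eΓ.symm a) (Stmt15Aux.eΓ.symm b) with h | h | h
            · exact absurd h n1
            · exact Stmt15Aux.eΓ.symm.injective h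
            · exact absurd h n2}
    · intro a b c hab
      show r (Stmt15Aux.eΓ.symm (c * a)) (Stmt15Aux.eΓ.symm (c * b))
      rw [map_mul, map_mul]
      exact hl _ _ _ hab
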